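/- The map defined on the generators of G by a ↦ cᵃ, b ↦ d, c ↦ bᵃ, d ↦ c extends to a group endomorphism φ : G → G. -/

import Mathlib

open Equiv

/-! ## The binary rooted tree and the twisted twin of the Grigorchuk group

We identify the vertex set of the infinite rooted binary tree with `V = List Bool`
(the free monoid `X*` on `X = {0,1}`), and realize automorphisms of the tree as
permutations of `V`.  The generators `a, b, c, d` of the twisted twin `G` of the
Grigorchuk group are defined by the recursive rules
`a(xw) = (¬x)w`, `ψ(b) = (c,a)`, `ψ(c) = (a,d)`, `ψ(d) = (1,b)`. -/

abbrev V : Type := List Bool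

def actA : V → V
  | [] => []
  | x :: w => (!x) :: w

theorem actA_invol : Function.Involutive actA := fun w => by
  cases w with
  | nil => rfl
  | cons x w => simp [actA]

mutual
  def actB : V → V
    | [] => []
    | false :: w => false :: actC w
    | true :: w => true :: actA w
  def actC : V → V
    | [] => []
    | false :: w => false :: actA w
    | true :: w => true :: actD w
  def actD : V → V
    | [] => []
    | false :: w => false :: w
    | true :: w => true :: actB w
end

theorem act_invol3 (w : V) :
    actB (actB w) = w ∧ actC (actC w) = w ∧ actD (actD w) = w := by
  induction w with
  | nil => exact ⟨rfl, rfl, rfl⟩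
  | cons x w ih =>
    cases x <;>
      exact ⟨by simp [actB, actC, actD, ih.1, ih.2.1, ih.2.2, actA_invol w],
        by simp [actB, actC, actD, ih.1, ih.2.1, ih.2.2, actA_invol w],
        by simp [actB, actC, actD, ih.1, ih.2.1, ih.2.2, actA_invol w]⟩

theorem actB_invol : Function.Involutive actB := fun w => (act_invol3 w).1
theorem actC_invol : Function.Involutive actC := fun w => (act_invol3 w).2.1
theorem actD_invol : Function.Involutive actD := fun w => (act_invol3 w).2.2

/-- The generator `a`: the root swap. -/
def a : Perm V := actA_invol.toPerm actA
/-- The generator `b`, with `ψ(b) = (c, a)`. -/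
def b : Perm V := actB_invol.toPerm actB
/-- The generator `c`, with `ψ(c) = (a, d)`. -/
def c : Perm V := actC_invol.toPerm actC
/-- The generator `d`, with `ψ(d) = (1, b)`. -/
def d : Perm V := actD_invol.toPerm actD

@[simp] theorem coe_a : ⇑a = actA := rfl
@[simp] theorem coe_b : ⇑b = actB := rfl
@[simp] theorem coe_c : ⇑c = actC := rfl
@[simp] theorem coe_d : ⇑d = actD := rfl

/-- The twisted twin of the Grigorchuk group. -/
def G : Subgroup (Perm V) := Subgroup.closure {a, b, c, d}

theorem a_mem_G : a ∈ G := Subgroup.subset_closure (by simp)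
theorem b_mem_G : b ∈ G := Subgroup.subset_closure (by simp)
theorem c_mem_G : c ∈ G := Subgroup.subset_closure (by simp)
theorem d_mem_G : d ∈ G := Subgroup.subset_closure (by simp)

/-- `hasState g v s` says that the state (section) of `g` at the vertex `v` is `s`,
i.e. `g (v ++ w) = g v ++ s w` for all `w`. -/
def hasState (g : Perm V) (v : V) (s : Perm V) : Prop :=
  ∀ w : V, g (v ++ w) = g v ++ s w

def vstarFun (v : V) (f : V → V) : V → V :=
  fun w => if v <+: w then v ++ f (w.drop v.length) else w

theorem vstarFun_comp (v : V) (f f' : V → V) (w : V) :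
    vstarFun v f (vstarFun v f' w) = vstarFun v (f ∘ f') w := by
  by_cases h : v <+: w
  · obtain ⟨t, rfl⟩ := h
    simp [vstarFun, List.prefix_append, List.drop_left]
  · simp [vstarFun, h]

theorem vstarFun_id (v w : V) : vstarFun v id w = w := by
  by_cases h : v <+: w
  · obtain ⟨t, rfl⟩ := h
    simp [vstarFun, List.prefix_append, List.drop_left]
  · simp [vstarFun, h]

/-- `vstar v g` is the automorphism `v * g`, acting as `g` on the subtree rooted
at `v` and trivially elsewhere. -/
def vstar (v : V) (g : Perm V) : Perm V where
  toFun := vstarFun v g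
  invFun := vstarFun v g.symm
  left_inv := fun w => by
    rw [vstarFun_comp, Equiv.symm_comp_self]
    exact vstarFun_id v w
  right_inv := fun w => by
    rw [vstarFun_comp, Equiv.self_comp_symm]
    exact vstarFun_id v w

/-- `XstarSub n H` is the subgroup `Xⁿ * H`: the product of the copies `v * H`
over all vertices `v` of level `n` (equivalently, the subgroup they generate). -/
def XstarSub (n : ℕ) (H : Subgroup (Perm V)) : Subgroup (Perm V) :=
  Subgroup.closure {p | ∃ v : V, ∃ g : Perm V, v.length = n ∧ g ∈ H ∧ p = vstar v g}

/-- `pairPerm s₀ s₁ = ψ⁻¹(s₀, s₁)`: the first-level stabilizer element whose states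
at the vertices `0` and `1` are `s₀` and `s₁`. -/
def pairPerm (s₀ s₁ : Perm V) : Perm V := vstar [false] s₀ * vstar [true] s₁

/-- The permutations fixing every vertex of level `n`. -/
def stabLevel (n : ℕ) : Subgroup (Perm V) where
  carrier := {g : Perm V | ∀ v : V, v.length = n → g v = v}
  one_mem' := fun _ _ => rfl
  mul_mem' := by
    intro g h hg hh v hv
    show g (h v) = v
    rw [hh v hv, hg v hv]
  inv_mem' := by
    intro g hg v hv
    show g⁻¹ v = v
    conv_lhs => rw [← hg v hv]
    exact g.symm_apply_apply v

/-- The `n`-th level stabilizer `Stab_G(n)` of `G`. -/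
def stabG (n : ℕ) : Subgroup (Perm V) := G ⊓ stabLevel n

/-- The commutator `[x, y] = x⁻¹ y⁻¹ x y` (paper convention). -/
def pc (x y : Perm V) : Perm V := x⁻¹ * y⁻¹ * x * y
/-- Conjugation `xʸ = y⁻¹ x y`. -/
def cj (x y : Perm V) : Perm V := y⁻¹ * x * y

/-- The normal closure in `G` of a subset `S` of `G`. -/
def ncl (S : Set (Perm V)) : Subgroup (Perm V) :=
  Subgroup.closure {x | ∃ s ∈ S, ∃ g ∈ G, x = g⁻¹ * s * g}

/-- `K = ⟨[a,b],[b,c],[b,d],[c,d], bcd⟩^G`. -/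
def K : Subgroup (Perm V) := ncl {pc a b, pc b c, pc b d, pc c d, b * c * d}

/-- The subgroup `[K, G]`. -/
def KG : Subgroup (Perm V) := ⁅K, G⁆

/-- The subgroup `C`, generated by `[K,G]` and `[a,b][b,c]`. -/
def Csub : Subgroup (Perm V) := KG ⊔ Subgroup.closure {pc a b * pc b c}

/-- `γ_n(G)`, the `n`-th term of the lower central series of `G` (starting at `γ₁ = G`),
viewed as a subgroup of `Perm V`. -/
def gammaG (n : ℕ) : Subgroup (Perm V) :=
  Subgroup.map G.subtype ((⊤ : Subgroup ↥G).lowerCentralSeries (n - 1))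

/-! ### Auxiliary development for `stmt2` -/

set_option maxRecDepth 40000

section PhiConstruction

open Subgroup

/- Involutivity of the generators, as group identities. -/
theorem a_mul_a : a * a = 1 := Equiv.ext fun w => actA_invol w
theorem b_mul_b : b * b = 1 := Equiv.ext fun w => actB_invol w
theorem c_mul_c : c * c = 1 := Equiv.ext fun w => actC_invol w
theorem d_mul_d : d * d = 1 := Equiv.ext fun w => actD_invol w

theorem a_inv : a⁻¹ = a := inv_eq_of_mul_eq_one_right a_mul_a
theorem b_inv : b⁻¹ = b := inv_eq_of_mul_eq_one_right b_mul_b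
theorem c_inv : c⁻¹ = c := inv_eq_of_mul_eq_one_right c_mul_c
theorem d_inv : d⁻¹ = d := inv_eq_of_mul_eq_one_right d_mul_d

/- Computation rules for `vstarFun` on single-letter vertices. -/
theorem vf_eq (x : Bool) (f : V → V) (t : V) :
    vstarFun [x] f (x :: t) = x :: f t := by
  simp only [vstarFun]
  rw [if_pos ⟨t, rfl⟩]
  rfl

theorem vf_ne {x y : Bool} (h : x ≠ y) (f : V → V) (t : V) :
    vstarFun [x] f (y :: t) = y :: t := by
  simp only [vstarFun]
  rw [if_neg]
  rintro ⟨s, hs⟩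
  simp only [List.cons_append, List.nil_append] at hs
  exact h (List.cons_eq_cons.mp hs).1

theorem vf_nil (x : Bool) (f : V → V) : vstarFun [x] f [] = [] := by
  simp only [vstarFun]
  rw [if_neg]
  rintro ⟨s, hs⟩
  simp at hs

theorem vstar_apply (v : V) (g : Perm V) (w : V) : vstar v g w = vstarFun v ⇑g w := rfl

theorem vstar_mul (v : V) (g h : Perm V) : vstar v (g * h) = vstar v g * vstar v h := by
  refine Equiv.ext fun w => ?_
  rw [Perm.mul_apply, vstar_apply, vstar_apply, vstar_apply, vstarFun_comp,
    Equiv.Perm.coe_mul]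

theorem vstar_comm (s t : Perm V) :
    vstar [false] s * vstar [true] t = vstar [true] t * vstar [false] s := by
  refine Equiv.ext fun w => ?_
  cases w with
  | nil => simp [Perm.mul_apply, vstar_apply, vf_nil]
  | cons x u =>
    cases x <;>
      simp [Perm.mul_apply, vstar_apply, vf_nil, vf_eq,
        vf_ne (show (true : Bool) ≠ false by simp),
        vf_ne (show (false : Bool) ≠ true by simp)]

theorem pairPerm_mul (s t s' t' : Perm V) :
    pairPerm s t * pairPerm s' t' = pairPerm (s * s') (t * t') := by
  unfold pairPerm
  rw [vstar_mul, vstar_mul, mul_assoc, ← mul_assoc (vstar [true] t), ← vstar_comm,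
    mul_assoc, ← mul_assoc]

theorem pairPerm_one : pairPerm 1 1 = 1 := by
  refine Equiv.ext fun w => ?_
  show vstarFun [false] ⇑(1 : Perm V) (vstarFun [true] ⇑(1 : Perm V) w) = w
  rw [Equiv.Perm.coe_one, vstarFun_id, vstarFun_id]

theorem pairPerm_apply (s t : Perm V) (w : V) :
    pairPerm s t w = vstarFun [false] ⇑s (vstarFun [true] ⇑t w) := rfl

/- The four wreath-recursion identities. -/
theorem pp_da : pairPerm d a = cj c a := by
  refine Equiv.ext fun w => ?_
  cases w with
  | nil =>
    simp [pairPerm_apply, vf_nil, cj, Perm.mul_apply, a_inv, actA, actC]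
  | cons x t =>
    cases x <;>
      simp [pairPerm_apply, vf_eq, cj, Perm.mul_apply, a_inv, actA, actC,
        vf_ne (show (true : Bool) ≠ false by simp),
        vf_ne (show (false : Bool) ≠ true by simp)]

theorem pp_1b : pairPerm 1 b = d := by
  refine Equiv.ext fun w => ?_
  cases w with
  | nil => simp [pairPerm_apply, vf_nil, actD]
  | cons x t =>
    cases x <;>
      simp [pairPerm_apply, vf_eq, actD, Equiv.Perm.coe_one,
        vf_ne (show (true : Bool) ≠ false by simp),
        vf_ne (show (false : Bool) ≠ true by simp)]

theorem pp_ac : pairPerm a c = cj b a := by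
  refine Equiv.ext fun w => ?_
  cases w with
  | nil =>
    simp [pairPerm_apply, vf_nil, cj, Perm.mul_apply, a_inv, actA, actB]
  | cons x t =>
    cases x <;>
      simp [pairPerm_apply, vf_eq, cj, Perm.mul_apply, a_inv, actA, actB,
        vf_ne (show (true : Bool) ≠ false by simp),
        vf_ne (show (false : Bool) ≠ true by simp)]

theorem pp_ad : pairPerm a d = c := by
  refine Equiv.ext fun w => ?_
  cases w with
  | nil => simp [pairPerm_apply, vf_nil, actC]
  | cons x t =>
    cases x <;>
      simp [pairPerm_apply, vf_eq, actA, actC, actD,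
        vf_ne (show (true : Bool) ≠ false by simp),
        vf_ne (show (false : Bool) ≠ true by simp)]

/- The dihedral group generated by `a` and `d`. -/
theorem had4 : (a * d) ^ 4 = 1 := by
  have h : ∀ w : V, actA (actD (actA (actD (actA (actD (actA (actD w))))))) = w := by
    intro w
    cases w with
    | nil => rfl
    | cons x t => cases x <;> simp [actA, actD, actB_invol t]
  refine Equiv.ext fun w => ?_
  have h4 : ((a * d) ^ 4) w = a (d (a (d (a (d (a (d w))))))) := by
    simp [pow_succ, Perm.mul_apply]
  rw [h4]
  exact h w

theorem hx3a : (a * d) ^ 3 * a = d := by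
  have h1 : (a * d) ^ 3 = (a * d)⁻¹ := by
    apply eq_inv_of_mul_eq_one_left
    rw [← pow_succ]
    exact had4
  rw [h1, mul_inv_rev, d_inv, a_inv, mul_assoc, a_mul_a, mul_one]

theorem haxp : a * (a * d) = (a * d) ^ 3 * a := by
  rw [hx3a, ← mul_assoc, a_mul_a, one_mul]

theorem hamul : ∀ n : ℕ, a * (a * d) ^ n = (a * d) ^ (3 * n) * a := by
  intro n
  induction n with
  | zero => simp
  | succ n ih =>
    rw [pow_succ, ← mul_assoc, ih, mul_assoc, haxp, ← mul_assoc, ← pow_add,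
      show 3 * n + 3 = 3 * (n + 1) by ring]

theorem hxmod (n : ℕ) : (a * d) ^ n = (a * d) ^ (n % 4) := by
  conv_lhs => rw [← Nat.div_add_mod n 4]
  rw [pow_add, pow_mul, had4, one_pow, one_mul]

theorem hamod (n : ℕ) : a ^ n = a ^ (n % 2) := by
  have h2 : a ^ 2 = 1 := by rw [pow_two, a_mul_a]
  conv_lhs => rw [← Nat.div_add_mod n 2]
  rw [pow_add, pow_mul, h2, one_pow, one_mul]

/-- The element `(ad)^k aᵉ` of the dihedral group `⟨a, d⟩`. -/
def delem (k : ZMod 4) (e : ZMod 2) : Perm V := (a * d) ^ k.val * a ^ e.val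

/-- Multiplication rule for dihedral coordinates. -/
def dm8 (c1 c2 : ZMod 4 × ZMod 2) : ZMod 4 × ZMod 2 :=
  (c1.1 + (if c1.2 = 0 then c2.1 else -c2.1), c1.2 + c2.2)

theorem delem_mul (k m : ZMod 4) (e f : ZMod 2) :
    delem k e * delem m f = delem (dm8 (k, e) (m, f)).1 (dm8 (k, e) (m, f)).2 := by
  have he2 : ∀ e : ZMod 2, e = 0 ∨ e = 1 := by decide
  rcases he2 e with rfl | rfl
  · have hdm : dm8 (k, 0) (m, f) = (k + m, f) := by
      simp [dm8, show ((0 : ZMod 2) = 0) ↔ True by decide]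
    rw [hdm]
    have h0 : ((0 : ZMod 2)).val = 0 := rfl
    simp only [delem, h0, pow_zero, mul_one]
    rw [← mul_assoc, ← pow_add, hxmod (k.val + m.val), ← ZMod.val_add]
  · have hdm : dm8 (k, 1) (m, f) = (k + -m, 1 + f) := by
      simp [dm8, show ((1 : ZMod 2) = 0) ↔ False by decide]
    rw [hdm]
    have h1 : ((1 : ZMod 2)).val = 1 := rfl
    simp only [delem, h1, pow_one]
    rw [mul_assoc, ← mul_assoc a, hamul, mul_assoc, ← mul_assoc ((a * d) ^ k.val),
      ← pow_add, show a * a ^ f.val = a ^ (1 + f.val) by rw [pow_add, pow_one]]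
    have hX : (a * d) ^ (k.val + 3 * m.val) = (a * d) ^ ((k + -m).val) := by
      rw [hxmod (k.val + 3 * m.val), hxmod ((k + -m).val)]
      congr 1
      exact (by decide : ∀ k m : ZMod 4, (k.val + 3 * m.val) % 4 = ((k + -m).val) % 4) k m
    have hA : a ^ (1 + f.val) = a ^ ((1 + f).val) := by
      rw [hamod (1 + f.val), hamod ((1 + f).val)]
      congr 1
      exact (by decide : ∀ f : ZMod 2, (1 + f.val) % 2 = ((1 + f).val) % 2) f
    rw [hX, hA]

theorem delem_00 : delem 0 0 = 1 := by
  have h0 : ((0 : ZMod 4)).val = 0 := rfl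
  have h0' : ((0 : ZMod 2)).val = 0 := rfl
  rw [delem, h0, h0', pow_zero, pow_zero, one_mul]

theorem delem_31 : delem 3 1 = d := by
  have h3 : ((3 : ZMod 4)).val = 3 := rfl
  have h1 : ((1 : ZMod 2)).val = 1 := rfl
  rw [delem, h3, h1, pow_one, hx3a]

theorem delem_01 : delem 0 1 = a := by
  have h0 : ((0 : ZMod 4)).val = 0 := rfl
  have h1 : ((1 : ZMod 2)).val = 1 := rfl
  rw [delem, h0, h1, pow_zero, pow_one, one_mul]

/- Truncation of a tree automorphism to the third level. -/
def keyA : List V := [[true,false,false],[true,false,true],[true,true,false],[true,true,true],[false,false,false],[false,false,true],[false,true,false],[false,true,true]]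
def keyB : List V := [[false,false,true],[false,false,false],[false,true,false],[false,true,true],[true,true,false],[true,true,true],[true,false,false],[true,false,true]]
def keyC : List V := [[false,true,false],[false,true,true],[false,false,false],[false,false,true],[true,false,false],[true,false,true],[true,true,false],[true,true,true]]
def keyD : List V := [[false,false,false],[false,false,true],[false,true,false],[false,true,true],[true,false,false],[true,false,true],[true,true,true],[true,true,false]]
def L8 : List V := [[false,false,false],[false,false,true],[false,true,false],[false,true,true],[true,false,false],[true,false,true],[true,true,false],[true,true,true]]
def RL : List (List V × ZMod 4 × ZMod 2) := [
  ([[false,false,false],[false,false,true],[false,true,false],[false,true,true],[true,false,false],[true,false,true],[true,true,false],[true,true,true]], (0,0)),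
  ([[false,false,false],[false,false,true],[false,true,false],[false,true,true],[true,false,false],[true,false,true],[true,true,true],[true,true,false]], (0,1)),
  ([[false,false,false],[false,false,true],[false,true,false],[false,true,true],[true,false,true],[true,false,false],[true,true,false],[true,true,true]], (0,1)),
  ([[false,false,false],[false,false,true],[false,true,false],[false,true,true],[true,false,true],[true,false,false],[true,true,true],[true,true,false]], (0,0)),
  ([[false,false,false],[false,false,true],[false,true,false],[false,true,true],[true,true,false],[true,true,true],[true,false,false],[true,false,true]], (2,1)),
  ([[false,false,false],[false,false,true],[false,true,false],[false,true,true],[true,true,false],[true,true,true],[true,false,true],[true,false,false]], (2,0)),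
  ([[false,false,false],[false,false,true],[false,true,false],[false,true,true],[true,true,true],[true,true,false],[true,false,false],[true,false,true]], (2,0)),
  ([[false,false,false],[false,false,true],[false,true,false],[false,true,true],[true,true,true],[true,true,false],[true,false,true],[true,false,false]], (2,1)),
  ([[false,false,false],[false,false,true],[false,true,true],[false,true,false],[true,false,false],[true,false,true],[true,true,false],[true,true,true]], (2,1)),
  ([[false,false,false],[false,false,true],[false,true,true],[false,true,false],[true,false,false],[true,false,true],[true,true,true],[true,true,false]], (2,0)),
  ([[false,false,false],[false,false,true],[false,true,true],[false,true,false],[true,false,true],[true,false,false],[true,true,false],[true,true,true]], (2,0)),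
  ([[false,false,false],[false,false,true],[false,true,true],[false,true,false],[true,false,true],[true,false,false],[true,true,true],[true,true,false]], (2,1)),
  ([[false,false,false],[false,false,true],[false,true,true],[false,true,false],[true,true,false],[true,true,true],[true,false,false],[true,false,true]], (0,0)),
  ([[false,false,false],[false,false,true],[false,true,true],[false,true,false],[true,true,false],[true,true,true],[true,false,true],[true,false,false]], (0,1)),
  ([[false,false,false],[false,false,true],[false,true,true],[false,true,false],[true,true,true],[true,true,false],[true,false,false],[true,false,true]], (0,1)),
  ([[false,false,false],[false,false,true],[false,true,true],[false,true,false],[true,true,true],[true,true,false],[true,false,true],[true,false,false]], (0,0)),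
  ([[false,false,true],[false,false,false],[false,true,false],[false,true,true],[true,false,false],[true,false,true],[true,true,false],[true,true,true]], (2,1)),
  ([[false,false,true],[false,false,false],[false,true,false],[false,true,true],[true,false,false],[true,false,true],[true,true,true],[true,true,false]], (2,0)),
  ([[false,false,true],[false,false,false],[false,true,false],[false,true,true],[true,false,true],[true,false,false],[true,true,false],[true,true,true]], (2,0)),
  ([[false,false,true],[false,false,false],[false,true,false],[false,true,true],[true,false,true],[true,false,false],[true,true,true],[true,true,false]], (2,1)),
  ([[false,false,true],[false,false,false],[false,true,false],[false,true,true],[true,true,false],[true,true,true],[true,false,false],[true,false,true]], (0,0)),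
  ([[false,false,true],[false,false,false],[false,true,false],[false,true,true],[true,true,false],[true,true,true],[true,false,true],[true,false,false]], (0,1)),
  ([[false,false,true],[false,false,false],[false,true,false],[false,true,true],[true,true,true],[true,true,false],[true,false,false],[true,false,true]], (0,1)),
  ([[false,false,true],[false,false,false],[false,true,false],[false,true,true],[true,true,true],[true,true,false],[true,false,true],[true,false,false]], (0,0)),
  ([[false,false,true],[false,false,false],[false,true,true],[false,true,false],[true,false,false],[true,false,true],[true,true,false],[true,true,true]], (0,0)),
  ([[false,false,true],[false,false,false],[false,true,true],[false,true,false],[true,false,false],[true,false,true],[true,true,true],[true,true,false]], (0,1)),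
  ([[false,false,true],[false,false,false],[false,true,true],[false,true,false],[true,false,true],[true,false,false],[true,true,false],[true,true,true]], (0,1)),
  ([[false,false,true],[false,false,false],[false,true,true],[false,true,false],[true,false,true],[true,false,false],[true,true,true],[true,true,false]], (0,0)),
  ([[false,false,true],[false,false,false],[false,true,true],[false,true,false],[true,true,false],[true,true,true],[true,false,false],[true,false,true]], (2,1)),
  ([[false,false,true],[false,false,false],[false,true,true],[false,true,false],[true,true,false],[true,true,true],[true,false,true],[true,false,false]], (2,0)),
  ([[false,false,true],[false,false,false],[false,true,true],[false,true,false],[true,true,true],[true,true,false],[true,false,false],[true,false,true]], (2,0)),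
  ([[false,false,true],[false,false,false],[false,true,true],[false,true,false],[true,true,true],[true,true,false],[true,false,true],[true,false,false]], (2,1)),
  ([[false,true,false],[false,true,true],[false,false,false],[false,false,true],[true,false,false],[true,false,true],[true,true,false],[true,true,true]], (0,1)),
  ([[false,true,false],[false,true,true],[false,false,false],[false,false,true],[true,false,false],[true,false,true],[true,true,true],[true,true,false]], (0,0)),
  ([[false,true,false],[false,true,true],[false,false,false],[false,false,true],[true,false,true],[true,false,false],[true,true,false],[true,true,true]], (0,0)),
  ([[false,true,false],[false,true,true],[false,false,false],[false,false,true],[true,false,true],[true,false,false],[true,true,true],[true,true,false]], (0,1)),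
  ([[false,true,false],[false,true,true],[false,false,false],[false,false,true],[true,true,false],[true,true,true],[true,false,false],[true,false,true]], (2,0)),
  ([[false,true,false],[false,true,true],[false,false,false],[false,false,true],[true,true,false],[true,true,true],[true,false,true],[true,false,false]], (2,1)),
  ([[false,true,false],[false,true,true],[false,false,false],[false,false,true],[true,true,true],[true,true,false],[true,false,false],[true,false,true]], (2,1)),
  ([[false,true,false],[false,true,true],[false,false,false],[false,false,true],[true,true,true],[true,true,false],[true,false,true],[true,false,false]], (2,0)),
  ([[false,true,false],[false,true,true],[false,false,true],[false,false,false],[true,false,false],[true,false,true],[true,true,false],[true,true,true]], (2,0)),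
  ([[false,true,false],[false,true,true],[false,false,true],[false,false,false],[true,false,false],[true,false,true],[true,true,true],[true,true,false]], (2,1)),
  ([[false,true,false],[false,true,true],[false,false,true],[false,false,false],[true,false,true],[true,false,false],[true,true,false],[true,true,true]], (2,1)),
  ([[false,true,false],[false,true,true],[false,false,true],[false,false,false],[true,false,true],[true,false,false],[true,true,true],[true,true,false]], (2,0)),
  ([[false,true,false],[false,true,true],[false,false,true],[false,false,false],[true,true,false],[true,true,true],[true,false,false],[true,false,true]], (0,1)),
  ([[false,true,false],[false,true,true],[false,false,true],[false,false,false],[true,true,false],[true,true,true],[true,false,true],[true,false,false]], (0,0)),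
  ([[false,true,false],[false,true,true],[false,false,true],[false,false,false],[true,true,true],[true,true,false],[true,false,false],[true,false,true]], (0,0)),
  ([[false,true,false],[false,true,true],[false,false,true],[false,false,false],[true,true,true],[true,true,false],[true,false,true],[true,false,false]], (0,1)),
  ([[false,true,true],[false,true,false],[false,false,false],[false,false,true],[true,false,false],[true,false,true],[true,true,false],[true,true,true]], (2,0)),
  ([[false,true,true],[false,true,false],[false,false,false],[false,false,true],[true,false,false],[true,false,true],[true,true,true],[true,true,false]], (2,1)),
  ([[false,true,true],[false,true,false],[false,false,false],[false,false,true],[true,false,true],[true,false,false],[true,true,false],[true,true,true]], (2,1)),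
  ([[false,true,true],[false,true,false],[false,false,false],[false,false,true],[true,false,true],[true,false,false],[true,true,true],[true,true,false]], (2,0)),
  ([[false,true,true],[false,true,false],[false,false,false],[false,false,true],[true,true,false],[true,true,true],[true,false,false],[true,false,true]], (0,1)),
  ([[false,true,true],[false,true,false],[false,false,false],[false,false,true],[true,true,false],[true,true,true],[true,false,true],[true,false,false]], (0,0)),
  ([[false,true,true],[false,true,false],[false,false,false],[false,false,true],[true,true,true],[true,true,false],[true,false,false],[true,false,true]], (0,0)),
  ([[false,true,true],[false,true,false],[false,false,false],[false,false,true],[true,true,true],[true,true,false],[true,false,true],[true,false,false]], (0,1)),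
  ([[false,true,true],[false,true,false],[false,false,true],[false,false,false],[true,false,false],[true,false,true],[true,true,false],[true,true,true]], (0,1)),
  ([[false,true,true],[false,true,false],[false,false,true],[false,false,false],[true,false,false],[true,false,true],[true,true,true],[true,true,false]], (0,0)),
  ([[false,true,true],[false,true,false],[false,false,true],[false,false,false],[true,false,true],[true,false,false],[true,true,false],[true,true,true]], (0,0)),
  ([[false,true,true],[false,true,false],[false,false,true],[false,false,false],[true,false,true],[true,false,false],[true,true,true],[true,true,false]], (0,1)),
  ([[false,true,true],[false,true,false],[false,false,true],[false,false,false],[true,true,false],[true,true,true],[true,false,false],[true,false,true]], (2,0)),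
  ([[false,true,true],[false,true,false],[false,false,true],[false,false,false],[true,true,false],[true,true,true],[true,false,true],[true,false,false]], (2,1)),
  ([[false,true,true],[false,true,false],[false,false,true],[false,false,false],[true,true,true],[true,true,false],[true,false,false],[true,false,true]], (2,1)),
  ([[false,true,true],[false,true,false],[false,false,true],[false,false,false],[true,true,true],[true,true,false],[true,false,true],[true,false,false]], (2,0)),
  ([[true,false,false],[true,false,true],[true,true,false],[true,true,true],[false,false,false],[false,false,true],[false,true,false],[false,true,true]], (3,1)),
  ([[true,false,false],[true,false,true],[true,true,false],[true,true,true],[false,false,false],[false,false,true],[false,true,true],[false,true,false]], (3,0)),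
  ([[true,false,false],[true,false,true],[true,true,false],[true,true,true],[false,false,true],[false,false,false],[false,true,false],[false,true,true]], (3,0)),
  ([[true,false,false],[true,false,true],[true,true,false],[true,true,true],[false,false,true],[false,false,false],[false,true,true],[false,true,false]], (3,1)),
  ([[true,false,false],[true,false,true],[true,true,false],[true,true,true],[false,true,false],[false,true,true],[false,false,false],[false,false,true]], (1,0)),
  ([[true,false,false],[true,false,true],[true,true,false],[true,true,true],[false,true,false],[false,true,true],[false,false,true],[false,false,false]], (1,1)),
  ([[true,false,false],[true,false,true],[true,true,false],[true,true,true],[false,true,true],[false,true,false],[false,false,false],[false,false,true]], (1,1)),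
  ([[true,false,false],[true,false,true],[true,true,false],[true,true,true],[false,true,true],[false,true,false],[false,false,true],[false,false,false]], (1,0)),
  ([[true,false,false],[true,false,true],[true,true,true],[true,true,false],[false,false,false],[false,false,true],[false,true,false],[false,true,true]], (1,0)),
  ([[true,false,false],[true,false,true],[true,true,true],[true,true,false],[false,false,false],[false,false,true],[false,true,true],[false,true,false]], (1,1)),
  ([[true,false,false],[true,false,true],[true,true,true],[true,true,false],[false,false,true],[false,false,false],[false,true,false],[false,true,true]], (1,1)),
  ([[true,false,false],[true,false,true],[true,true,true],[true,true,false],[false,false,true],[false,false,false],[false,true,true],[false,true,false]], (1,0)),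
  ([[true,false,false],[true,false,true],[true,true,true],[true,true,false],[false,true,false],[false,true,true],[false,false,false],[false,false,true]], (3,1)),
  ([[true,false,false],[true,false,true],[true,true,true],[true,true,false],[false,true,false],[false,true,true],[false,false,true],[false,false,false]], (3,0)),
  ([[true,false,false],[true,false,true],[true,true,true],[true,true,false],[false,true,true],[false,true,false],[false,false,false],[false,false,true]], (3,0)),
  ([[true,false,false],[true,false,true],[true,true,true],[true,true,false],[false,true,true],[false,true,false],[false,false,true],[false,false,false]], (3,1)),
  ([[true,false,true],[true,false,false],[true,true,false],[true,true,true],[false,false,false],[false,false,true],[false,true,false],[false,true,true]], (1,0)),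
  ([[true,false,true],[true,false,false],[true,true,false],[true,true,true],[false,false,false],[false,false,true],[false,true,true],[false,true,false]], (1,1)),
  ([[true,false,true],[true,false,false],[true,true,false],[true,true,true],[false,false,true],[false,false,false],[false,true,false],[false,true,true]], (1,1)),
  ([[true,false,true],[true,false,false],[true,true,false],[true,true,true],[false,false,true],[false,false,false],[false,true,true],[false,true,false]], (1,0)),
  ([[true,false,true],[true,false,false],[true,true,false],[true,true,true],[false,true,false],[false,true,true],[false,false,false],[false,false,true]], (3,1)),
  ([[true,false,true],[true,false,false],[true,true,false],[true,true,true],[false,true,false],[false,true,true],[false,false,true],[false,false,false]], (3,0)),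
  ([[true,false,true],[true,false,false],[true,true,false],[true,true,true],[false,true,true],[false,true,false],[false,false,false],[false,false,true]], (3,0)),
  ([[true,false,true],[true,false,false],[true,true,false],[true,true,true],[false,true,true],[false,true,false],[false,false,true],[false,false,false]], (3,1)),
  ([[true,false,true],[true,false,false],[true,true,true],[true,true,false],[false,false,false],[false,false,true],[false,true,false],[false,true,true]], (3,1)),
  ([[true,false,true],[true,false,false],[true,true,true],[true,true,false],[false,false,false],[false,false,true],[false,true,true],[false,true,false]], (3,0)),
  ([[true,false,true],[true,false,false],[true,true,true],[true,true,false],[false,false,true],[false,false,false],[false,true,false],[false,true,true]], (3,0)),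
  ([[true,false,true],[true,false,false],[true,true,true],[true,true,false],[false,false,true],[false,false,false],[false,true,true],[false,true,false]], (3,1)),
  ([[true,false,true],[true,false,false],[true,true,true],[true,true,false],[false,true,false],[false,true,true],[false,false,false],[false,false,true]], (1,0)),
  ([[true,false,true],[true,false,false],[true,true,true],[true,true,false],[false,true,false],[false,true,true],[false,false,true],[false,false,false]], (1,1)),
  ([[true,false,true],[true,false,false],[true,true,true],[true,true,false],[false,true,true],[false,true,false],[false,false,false],[false,false,true]], (1,1)),
  ([[true,false,true],[true,false,false],[true,true,true],[true,true,false],[false,true,true],[false,true,false],[false,false,true],[false,false,false]], (1,0)),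
  ([[true,true,false],[true,true,true],[true,false,false],[true,false,true],[false,false,false],[false,false,true],[false,true,false],[false,true,true]], (3,0)),
  ([[true,true,false],[true,true,true],[true,false,false],[true,false,true],[false,false,false],[false,false,true],[false,true,true],[false,true,false]], (3,1)),
  ([[true,true,false],[true,true,true],[true,false,false],[true,false,true],[false,false,true],[false,false,false],[false,true,false],[false,true,true]], (3,1)),
  ([[true,true,false],[true,true,true],[true,false,false],[true,false,true],[false,false,true],[false,false,false],[false,true,true],[false,true,false]], (3,0)),
  ([[true,true,false],[true,true,true],[true,false,false],[true,false,true],[false,true,false],[false,true,true],[false,false,false],[false,false,true]], (1,1)),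
  ([[true,true,false],[true,true,true],[true,false,false],[true,false,true],[false,true,false],[false,true,true],[false,false,true],[false,false,false]], (1,0)),
  ([[true,true,false],[true,true,true],[true,false,false],[true,false,true],[false,true,true],[false,true,false],[false,false,false],[false,false,true]], (1,0)),
  ([[true,true,false],[true,true,true],[true,false,false],[true,false,true],[false,true,true],[false,true,false],[false,false,true],[false,false,false]], (1,1)),
  ([[true,true,false],[true,true,true],[true,false,true],[true,false,false],[false,false,false],[false,false,true],[false,true,false],[false,true,true]], (1,1)),
  ([[true,true,false],[true,true,true],[true,false,true],[true,false,false],[false,false,false],[false,false,true],[false,true,true],[false,true,false]], (1,0)),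
  ([[true,true,false],[true,true,true],[true,false,true],[true,false,false],[false,false,true],[false,false,false],[false,true,false],[false,true,true]], (1,0)),
  ([[true,true,false],[true,true,true],[true,false,true],[true,false,false],[false,false,true],[false,false,false],[false,true,true],[false,true,false]], (1,1)),
  ([[true,true,false],[true,true,true],[true,false,true],[true,false,false],[false,true,false],[false,true,true],[false,false,false],[false,false,true]], (3,0)),
  ([[true,true,false],[true,true,true],[true,false,true],[true,false,false],[false,true,false],[false,true,true],[false,false,true],[false,false,false]], (3,1)),
  ([[true,true,false],[true,true,true],[true,false,true],[true,false,false],[false,true,true],[false,true,false],[false,false,false],[false,false,true]], (3,1)),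
  ([[true,true,false],[true,true,true],[true,false,true],[true,false,false],[false,true,true],[false,true,false],[false,false,true],[false,false,false]], (3,0)),
  ([[true,true,true],[true,true,false],[true,false,false],[true,false,true],[false,false,false],[false,false,true],[false,true,false],[false,true,true]], (1,1)),
  ([[true,true,true],[true,true,false],[true,false,false],[true,false,true],[false,false,false],[false,false,true],[false,true,true],[false,true,false]], (1,0)),
  ([[true,true,true],[true,true,false],[true,false,false],[true,false,true],[false,false,true],[false,false,false],[false,true,false],[false,true,true]], (1,0)),
  ([[true,true,true],[true,true,false],[true,false,false],[true,false,true],[false,false,true],[false,false,false],[false,true,true],[false,true,false]], (1,1)),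
  ([[true,true,true],[true,true,false],[true,false,false],[true,false,true],[false,true,false],[false,true,true],[false,false,false],[false,false,true]], (3,0)),
  ([[true,true,true],[true,true,false],[true,false,false],[true,false,true],[false,true,false],[false,true,true],[false,false,true],[false,false,false]], (3,1)),
  ([[true,true,true],[true,true,false],[true,false,false],[true,false,true],[false,true,true],[false,true,false],[false,false,false],[false,false,true]], (3,1)),
  ([[true,true,true],[true,true,false],[true,false,false],[true,false,true],[false,true,true],[false,true,false],[false,false,true],[false,false,false]], (3,0)),
  ([[true,true,true],[true,true,false],[true,false,true],[true,false,false],[false,false,false],[false,false,true],[false,true,false],[false,true,true]], (3,0)),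
  ([[true,true,true],[true,true,false],[true,false,true],[true,false,false],[false,false,false],[false,false,true],[false,true,true],[false,true,false]], (3,1)),
  ([[true,true,true],[true,true,false],[true,false,true],[true,false,false],[false,false,true],[false,false,false],[false,true,false],[false,true,true]], (3,1)),
  ([[true,true,true],[true,true,false],[true,false,true],[true,false,false],[false,false,true],[false,false,false],[false,true,true],[false,true,false]], (3,0)),
  ([[true,true,true],[true,true,false],[true,false,true],[true,false,false],[false,true,false],[false,true,true],[false,false,false],[false,false,true]], (1,1)),
  ([[true,true,true],[true,true,false],[true,false,true],[true,false,false],[false,true,false],[false,true,true],[false,false,true],[false,false,false]], (1,0)),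
  ([[true,true,true],[true,true,false],[true,false,true],[true,false,false],[false,true,true],[false,true,false],[false,false,false],[false,false,true]], (1,0)),
  ([[true,true,true],[true,true,false],[true,false,true],[true,false,false],[false,true,true],[false,true,false],[false,false,true],[false,false,false]], (1,1))]

/-- The level-3 truncation (portrait) of a permutation. -/
def keyOf (g : Perm V) : List V := L8.map ⇑g

/-- Position of a word in a list of words. -/
def pos (v : V) : List V → ℕ
  | [] => 0
  | w :: t => if v = w then 0 else pos v t + 1

theorem getD_map_pos (f : V → V) {v : V} :
    ∀ {l : List V}, v ∈ l → ∀ d, (l.map f).getD (pos v l) d = f v := by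
  intro l
  induction l with
  | nil => intro h; simp at h
  | cons w t ih =>
    intro h d
    by_cases hv : v = w
    · subst hv; simp [pos]
    · have hm : v ∈ t := by
        rcases List.mem_cons.mp h with h1 | h2
        · exact absurd h1 hv
        · exact h2
      simp only [pos, if_neg hv, List.map_cons, List.getD_cons_succ]
      exact ih hm d

/-- Composition of truncations. -/
def compKey (k1 k2 : List V) : List V := k2.map (fun v => k1.getD (pos v L8) v)

theorem keyOf_one : keyOf 1 = L8 := by simp [keyOf]

theorem keyOf_a : keyOf a = keyA := by decide
theorem keyOf_b : keyOf b = keyB := by decide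
theorem keyOf_c : keyOf c = keyC := by decide
theorem keyOf_d : keyOf d = keyD := by decide

theorem keyOf_mul (g h : Perm V) (hh : ∀ v ∈ keyOf h, v ∈ L8) :
    keyOf (g * h) = compKey (keyOf g) (keyOf h) := by
  unfold keyOf compKey at *
  rw [Equiv.Perm.coe_mul, ← List.map_map]
  apply List.map_congr_left
  intro v hv
  exact (getD_map_pos ⇑g (hh v hv) v).symm

theorem RL_valid : ∀ e ∈ RL, ∀ v ∈ e.1, v ∈ L8 := by decide
theorem RL_id : ∀ e ∈ RL, e.1 = L8 → e.2 = ((0 : ZMod 4), (0 : ZMod 2)) := by decide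
theorem RL_mem_id : (L8, ((0 : ZMod 4), (0 : ZMod 2))) ∈ RL := by decide
theorem RL_clA : ∀ e ∈ RL, (compKey keyA e.1, dm8 (3, 1) e.2) ∈ RL := by decide
theorem RL_clB : ∀ e ∈ RL, (compKey keyB e.1, dm8 (0, 0) e.2) ∈ RL := by decide
theorem RL_clC : ∀ e ∈ RL, (compKey keyC e.1, dm8 (0, 1) e.2) ∈ RL := by decide
theorem RL_clD : ∀ e ∈ RL, (compKey keyD e.1, dm8 (0, 1) e.2) ∈ RL := by decide

/- The graph subgroup tracking the substitution on generators at the level of states. -/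
def SP : Set (Perm V × Perm V) := {(a, d), (b, 1), (c, a), (d, a)}

def PP (q : Perm V × Perm V) : Prop :=
  ∃ e, e ∈ RL ∧ keyOf q.1 = e.1 ∧ q.2 = delem e.2.1 e.2.2

theorem step {y : Perm V × Perm V} (ky : List V) (cy : ZMod 4 × ZMod 2)
    (hky : keyOf y.1 = ky) (hcy : y.2 = delem cy.1 cy.2)
    (hcl : ∀ e ∈ RL, (compKey ky e.1, dm8 cy e.2) ∈ RL)
    {q : Perm V × Perm V} (hq : PP q) : PP (y * q) := by
  obtain ⟨e, he, hk, hc⟩ := hq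
  refine ⟨(compKey ky e.1, dm8 cy e.2), hcl e he, ?_, ?_⟩
  · show keyOf (y.1 * q.1) = _
    rw [keyOf_mul y.1 q.1 (by rw [hk]; exact RL_valid e he), hky, hk]
  · show y.2 * q.2 = _
    rw [hcy, hc, delem_mul]

theorem SP_inv : ∀ p ∈ SP, p⁻¹ = p := by
  rintro p hp
  simp only [SP, Set.mem_insert_iff, Set.mem_singleton_iff] at hp
  rcases hp with rfl | rfl | rfl | rfl <;>
    simp [Prod.ext_iff, a_inv, b_inv, c_inv, d_inv]

theorem step_of_mem {x : Perm V × Perm V} (hx : x ∈ SP) {q : Perm V × Perm V}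
    (hq : PP q) : PP (x * q) := by
  simp only [SP, Set.mem_insert_iff, Set.mem_singleton_iff] at hx
  rcases hx with rfl | rfl | rfl | rfl
  · exact step keyA (3, 1) keyOf_a delem_31.symm RL_clA hq
  · exact step keyB (0, 0) keyOf_b delem_00.symm RL_clB hq
  · exact step keyC (0, 1) keyOf_c delem_01.symm RL_clC hq
  · exact step keyD (0, 1) keyOf_d delem_01.symm RL_clD hq

theorem PP_all {q : Perm V × Perm V} (hq : q ∈ Subgroup.closure SP) : PP q := by
  induction hq using Subgroup.closure_induction_left with
  | one => exact ⟨(L8, ((0 : ZMod 4), (0 : ZMod 2))), RL_mem_id, keyOf_one, delem_00.symm⟩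
  | mul_left x hx y hy ih => exact step_of_mem hx ih
  | inv_mul_cancel x hx y hy ih =>
    rw [SP_inv x hx]
    exact step_of_mem hx ih

theorem TT_graph {q : Perm V × Perm V} (hq : q ∈ Subgroup.closure SP) (h1 : q.1 = 1) :
    q.2 = 1 := by
  obtain ⟨e, he, hk, hc⟩ := PP_all hq
  rw [h1, keyOf_one] at hk
  have h2 := RL_id e he hk.symm
  rw [hc, h2]
  exact delem_00

/-- The pairing homomorphism `(g, s) ↦ (g, ψ⁻¹(s, g))`. -/
def mu : (Perm V × Perm V) →* Perm V × Perm V where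
  toFun p := (p.1, pairPerm p.2 p.1)
  map_one' := by
    show ((1 : Perm V), pairPerm 1 1) = 1
    rw [pairPerm_one]
    rfl
  map_mul' p q := by
    show (p.1 * q.1, pairPerm (p.2 * q.2) (p.1 * q.1)) = _
    rw [← pairPerm_mul]
    rfl

/-- The graph of the endomorphism `φ`. -/
def HH : Subgroup (Perm V × Perm V) := (Subgroup.closure SP).map mu

theorem HH_graph {p : Perm V × Perm V} (hp : p ∈ HH) (h1 : p.1 = 1) : p.2 = 1 := by
  obtain ⟨q, hq, rfl⟩ := hp
  have hq1 : q.1 = 1 := h1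
  have hq2 : q.2 = 1 := TT_graph hq hq1
  show pairPerm q.2 q.1 = 1
  rw [hq1, hq2, pairPerm_one]

theorem HH_uniq {g y y' : Perm V} (h1 : (g, y) ∈ HH) (h2 : (g, y') ∈ HH) : y = y' := by
  have hm : ((g, y)⁻¹ * (g, y')) ∈ HH := mul_mem (inv_mem h1) h2
  have h3 : (y⁻¹ * y' : Perm V) = 1 :=
    HH_graph hm (show g⁻¹ * g = 1 from inv_mul_cancel g)
  exact inv_mul_eq_one.mp h3

theorem mem_HH_a : ((a : Perm V), cj c a) ∈ HH :=
  ⟨(a, d), Subgroup.subset_closure (Set.mem_insert _ _), by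
    show ((a : Perm V), pairPerm d a) = (a, cj c a)
    rw [pp_da]⟩

theorem mem_HH_b : ((b : Perm V), d) ∈ HH :=
  ⟨(b, 1), Subgroup.subset_closure (by simp [SP]), by
    show ((b : Perm V), pairPerm 1 b) = (b, d)
    rw [pp_1b]⟩

theorem mem_HH_c : ((c : Perm V), cj b a) ∈ HH :=
  ⟨(c, a), Subgroup.subset_closure (by simp [SP]), by
    show ((c : Perm V), pairPerm a c) = (c, cj b a)
    rw [pp_ac]⟩

theorem mem_HH_d : ((d : Perm V), c) ∈ HH :=
  ⟨(d, a), Subgroup.subset_closure (by simp [SP]), by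
    show ((d : Perm V), pairPerm a d) = (d, c)
    rw [pp_ad]⟩

theorem HH_le : HH ≤ G.prod G := by
  apply Subgroup.map_le_iff_le_comap.mpr
  apply (Subgroup.closure_le _).mpr
  rintro p hp
  simp only [SP, Set.mem_insert_iff, Set.mem_singleton_iff] at hp
  have hcj : ∀ x y : Perm V, x ∈ G → y ∈ G → cj x y ∈ G := fun x y hx hy =>
    mul_mem (mul_mem (inv_mem hy) hx) hy
  rcases hp with rfl | rfl | rfl | rfl <;>
    refine Subgroup.mem_comap.mpr (Subgroup.mem_prod.mpr ⟨?_, ?_⟩)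
  · exact a_mem_G
  · show pairPerm d a ∈ G
    rw [pp_da]; exact hcj c a c_mem_G a_mem_G
  · exact b_mem_G
  · show pairPerm 1 b ∈ G
    rw [pp_1b]; exact d_mem_G
  · exact c_mem_G
  · show pairPerm a c ∈ G
    rw [pp_ac]; exact hcj b a b_mem_G a_mem_G
  · exact d_mem_G
  · show pairPerm a d ∈ G
    rw [pp_ad]; exact c_mem_G

theorem exists_pair : ∀ g ∈ G, ∃ y : Perm V, (g, y) ∈ HH := by
  intro g hg
  have hg' : g ∈ Subgroup.closure {a, b, c, d} := hg
  clear hg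
  induction hg' using Subgroup.closure_induction with
  | mem x hx =>
    simp only [Set.mem_insert_iff, Set.mem_singleton_iff] at hx
    rcases hx with rfl | rfl | rfl | rfl
    · exact ⟨cj c a, mem_HH_a⟩
    · exact ⟨d, mem_HH_b⟩
    · exact ⟨cj b a, mem_HH_c⟩
    · exact ⟨c, mem_HH_d⟩
  | one => exact ⟨1, one_mem _⟩
  | mul x y hx hy ihx ihy =>
    obtain ⟨u, hu⟩ := ihx
    obtain ⟨v, hv⟩ := ihy
    exact ⟨u * v, mul_mem hu hv⟩
  | inv x hx ihx =>
    obtain ⟨u, hu⟩ := ihx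
    exact ⟨u⁻¹, inv_mem hu⟩

end PhiConstruction

/-- **Proposition.** The map `a ↦ cᵃ, b ↦ d, c ↦ bᵃ, d ↦ c` extends to an
endomorphism `φ` of `G`. -/
theorem stmt2 :
    ∃ φ : ↥G →* ↥G,
      (φ ⟨a, a_mem_G⟩ : Perm V) = cj c a ∧
      (φ ⟨b, b_mem_G⟩ : Perm V) = d ∧
      (φ ⟨c, c_mem_G⟩ : Perm V) = cj b a ∧
      (φ ⟨d, d_mem_G⟩ : Perm V) = c := by
  have hex : ∀ g : ↥G, ∃ y : Perm V, ((g : Perm V), y) ∈ HH := fun g =>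
    exists_pair g g.2
  choose f hf using hex
  have hfG : ∀ g : ↥G, f g ∈ G := fun g => (HH_le (hf g)).2
  refine ⟨{ toFun := fun g => ⟨f g, hfG g⟩
            map_one' := ?_
            map_mul' := ?_ }, ?_, ?_, ?_, ?_⟩
  · apply Subtype.ext
    exact HH_uniq (hf 1) (one_mem HH)
  · intro g h
    apply Subtype.ext
    show f (g * h) = f g * f h
    exact HH_uniq (hf (g * h)) (mul_mem (hf g) (hf h))
  · exact HH_uniq (hf ⟨a, a_mem_G⟩) mem_HH_a
  · exact HH_uniq (hf ⟨b, b_mem_G⟩) mem_HH_b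
  · exact HH_uniq (hf ⟨c, c_mem_G⟩) mem_HH_c
  · exact HH_uniq (hf ⟨d, d_mem_G⟩) mem_HH_d
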